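/- Let Σ be a d×d symmetric PSD matrix, let Π be the orthogonal projection onto the span of the top k eigenvectors of Σ (assuming λ_k(Σ) > λ_{k+1}(Σ)), and let Π̂ be any d×d orthogonal projection of rank k with ‖Π̂ - Π‖_2 ≤ φ. For 0 < γ̂ ≤ 1 let A = γ̂ Π̂ + (I - Π̂). Then ‖A Σ A‖_2 ≤ (γ̂ + φ)² λ_1(Σ) + 2(γ̂+φ)φ λ_1(Σ) + λ_{k+1}(Σ) + 2φ λ_{k+1}(Σ) + φ² λ_1(Σ). -/

import Mathlib

open Matrix

noncomputable def specNorm {d : ℕ} (A : Matrix (Fin d) (Fin d) ℝ) : ℝ :=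
  ‖Matrix.toEuclideanCLM (𝕜 := ℝ) A‖

section helpers
variable {d : ℕ}

lemma specNorm_nonneg (A : Matrix (Fin d) (Fin d) ℝ) : 0 ≤ specNorm A := norm_nonneg _

lemma specNorm_mul_le (A B : Matrix (Fin d) (Fin d) ℝ) :
    specNorm (A * B) ≤ specNorm A * specNorm B := by
  unfold specNorm; rw [_root_.map_mul]; exact norm_mul_le _ _

lemma specNorm_add_le (A B : Matrix (Fin d) (Fin d) ℝ) :
    specNorm (A + B) ≤ specNorm A + specNorm B := by
  unfold specNorm; rw [map_add]; exact norm_add_le _ _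

lemma specNorm_smul (c : ℝ) (A : Matrix (Fin d) (Fin d) ℝ) :
    specNorm (c • A) = |c| * specNorm A := by
  unfold specNorm; rw [_root_.map_smul]
  rw [norm_smul c (toEuclideanCLM (𝕜 := ℝ) A), Real.norm_eq_abs]

lemma specNorm_neg (A : Matrix (Fin d) (Fin d) ℝ) : specNorm (-A) = specNorm A := by
  unfold specNorm; rw [map_neg, norm_neg]

lemma dot_self_nonneg (x : Fin d → ℝ) : 0 ≤ x ⬝ᵥ x :=
  Finset.sum_nonneg fun i _ => mul_self_nonneg _

lemma specNorm_le_of_mulVec (M : Matrix (Fin d) (Fin d) ℝ) (c : ℝ) (hc : 0 ≤ c)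
    (h : ∀ x : Fin d → ℝ, (M.mulVec x) ⬝ᵥ (M.mulVec x) ≤ c ^ 2 * (x ⬝ᵥ x)) :
    specNorm M ≤ c := by
  unfold specNorm
  refine ContinuousLinearMap.opNorm_le_bound _ hc fun x => ?_
  have hx : ∀ y : EuclideanSpace ℝ (Fin d),
      ‖y‖ ^ 2 = (WithLp.equiv 2 _ y) ⬝ᵥ (WithLp.equiv 2 _ y) := by
    intro y
    rw [← real_inner_self_eq_norm_sq]
    simp [PiLp.inner_apply, dotProduct, WithLp.equiv]
    rw [EuclideanSpace.norm_sq_eq]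
    exact Finset.sum_congr rfl fun i _ => by rw [Real.norm_eq_abs, sq_abs, sq]
  have e1 : (WithLp.equiv 2 _) ((toEuclideanCLM (𝕜 := ℝ) M) x)
      = M.mulVec (WithLp.equiv 2 _ x) := by
    simp [Matrix.ofLp_toEuclideanCLM, Matrix.toLin'_apply]
  have key : ‖(toEuclideanCLM (𝕜 := ℝ) M) x‖ ^ 2 ≤ (c * ‖x‖) ^ 2 := by
    rw [hx, e1, mul_pow, hx x]
    exact h _
  have h1 : 0 ≤ c * ‖x‖ := mul_nonneg hc (norm_nonneg _)
  nlinarith [norm_nonneg ((toEuclideanCLM (𝕜 := ℝ) M) x)]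

end helpers

section algebra
variable {d : ℕ}

lemma dot_shift (M : Matrix (Fin d) (Fin d) ℝ) (x y : Fin d → ℝ) :
    (M.mulVec x) ⬝ᵥ y = x ⬝ᵥ (Mᵀ.mulVec y) := by
  simp only [dotProduct, mulVec, transpose_apply, Finset.sum_mul, Finset.mul_sum]
  rw [Finset.sum_comm]
  exact Finset.sum_congr rfl fun i _ => Finset.sum_congr rfl fun j _ => by ring

lemma vvT_mul_vvT (a b c e : Fin d → ℝ) :
    vecMulVec a b * vecMulVec c e = (b ⬝ᵥ c) • vecMulVec a e := by
  ext i j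
  simp only [Matrix.mul_apply, vecMulVec_apply, Matrix.smul_apply, smul_eq_mul, dotProduct]
  rw [Finset.sum_mul]
  exact Finset.sum_congr rfl fun l _ => by ring

lemma mulVec_vvT (a b x : Fin d → ℝ) :
    (vecMulVec a b).mulVec x = (b ⬝ᵥ x) • a := by
  ext i
  simp only [mulVec, vecMulVec_apply, dotProduct, Pi.smul_apply, smul_eq_mul]
  rw [Finset.sum_mul]
  exact Finset.sum_congr rfl fun l _ => by ring

lemma sum_vvT_mul (v : Fin d → (Fin d → ℝ))
    (hortho : ∀ i j, v i ⬝ᵥ v j = if i = j then (1 : ℝ) else 0)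
    (s t : Finset (Fin d)) (c e : Fin d → ℝ) :
    (∑ i ∈ s, c i • vecMulVec (v i) (v i)) * (∑ j ∈ t, e j • vecMulVec (v j) (v j))
      = ∑ i ∈ s ∩ t, (c i * e i) • vecMulVec (v i) (v i) := by
  rw [Finset.sum_mul_sum]
  have step : ∀ i ∈ s, ∑ j ∈ t, (c i • vecMulVec (v i) (v i)) * (e j • vecMulVec (v j) (v j))
      = if i ∈ t then (c i * e i) • vecMulVec (v i) (v i) else 0 := by
    intro i _
    rw [← Finset.sum_ite_eq t i (fun j => (c i * e j) • vecMulVec (v i) (v j))]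
    refine Finset.sum_congr rfl fun j _ => ?_
    rw [smul_mul_assoc, mul_smul_comm, vvT_mul_vvT, hortho, smul_smul, smul_smul]
    split_ifs with hij
    · subst hij; rw [mul_one]
    · simp
  rw [Finset.sum_congr rfl step, ← Finset.sum_filter, Finset.filter_mem_eq_inter]

lemma specNorm_proj_le (P : Matrix (Fin d) (Fin d) ℝ) (hP : P * P = P) (hPT : Pᵀ = P) :
    specNorm P ≤ 1 := by
  refine specNorm_le_of_mulVec P 1 zero_le_one fun x => ?_
  set u := P.mulVec x with hu
  have h1 : u ⬝ᵥ u = x ⬝ᵥ u := by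
    rw [hu, dot_shift, hPT, mulVec_mulVec, hP]
  have h2 : (x - u) ⬝ᵥ (x - u) = x ⬝ᵥ x - x ⬝ᵥ u - u ⬝ᵥ x + u ⬝ᵥ u := by
    simp [dotProduct_sub, sub_dotProduct]; ring
  have h3 := dot_self_nonneg (x - u)
  have h4 : u ⬝ᵥ x = x ⬝ᵥ u := dotProduct_comm _ _
  rw [h2] at h3
  nlinarith

lemma specNorm_A_le (P : Matrix (Fin d) (Fin d) ℝ) (hP : P * P = P) (hPT : Pᵀ = P)
    (γ : ℝ) (hγ0 : 0 ≤ γ) (hγ1 : γ ≤ 1) :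
    specNorm (γ • P + (1 - P)) ≤ 1 := by
  refine specNorm_le_of_mulVec _ 1 zero_le_one fun x => ?_
  set u := P.mulVec x with hu
  have e : ((γ • P + (1 - P)).mulVec x) = γ • u + (x - u) := by
    rw [add_mulVec, sub_mulVec, smul_mulVec, one_mulVec, hu]
  have h1 : u ⬝ᵥ u = x ⬝ᵥ u := by
    rw [hu, dot_shift, hPT, mulVec_mulVec, hP]
  have h4 : u ⬝ᵥ x = x ⬝ᵥ u := dotProduct_comm _ _
  have h3 := dot_self_nonneg u
  rw [e]
  simp only [dotProduct_add, add_dotProduct, dotProduct_sub, sub_dotProduct,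
    dotProduct_smul, smul_dotProduct, smul_eq_mul]
  nlinarith [mul_nonneg (mul_nonneg (sub_nonneg.2 hγ1) (by linarith : (0:ℝ) ≤ 1 + γ)) h3]

end algebra

section sumbound
variable {d : ℕ}

lemma sum_mulVec' {ι : Type*} (s : Finset ι) (f : ι → Matrix (Fin d) (Fin d) ℝ) (x : Fin d → ℝ) :
    (∑ i ∈ s, f i).mulVec x = ∑ i ∈ s, (f i).mulVec x := by
  ext j
  simp only [mulVec, dotProduct, Finset.sum_apply, Matrix.sum_apply, Finset.sum_mul]
  rw [Finset.sum_comm]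

lemma sum_dotProduct' {ι : Type*} (s : Finset ι) (f : ι → (Fin d → ℝ)) (y : Fin d → ℝ) :
    (∑ i ∈ s, f i) ⬝ᵥ y = ∑ i ∈ s, (f i ⬝ᵥ y) := by
  simp only [dotProduct, Finset.sum_apply, Finset.sum_mul]
  rw [Finset.sum_comm]

lemma dotProduct_sum' {ι : Type*} (s : Finset ι) (y : Fin d → ℝ) (f : ι → (Fin d → ℝ)) :
    y ⬝ᵥ (∑ i ∈ s, f i) = ∑ i ∈ s, (y ⬝ᵥ f i) := by
  simp only [dotProduct, Finset.sum_apply, Finset.mul_sum]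
  rw [Finset.sum_comm]

lemma sum_dot_sq (v : Fin d → (Fin d → ℝ))
    (hortho : ∀ i j, v i ⬝ᵥ v j = if i = j then (1 : ℝ) else 0) (x : Fin d → ℝ) :
    ∑ i : Fin d, (v i ⬝ᵥ x) ^ 2 = x ⬝ᵥ x := by
  set V : Matrix (Fin d) (Fin d) ℝ := Matrix.of v with hV
  have hVVT : V * Vᵀ = 1 := by
    ext i j
    simpa [hV, Matrix.mul_apply, Matrix.one_apply, dotProduct] using hortho i j
  have hVTV : Vᵀ * V = 1 := mul_eq_one_comm.mp hVVT
  have h1 : ∑ i : Fin d, (v i ⬝ᵥ x) ^ 2 = (V.mulVec x) ⬝ᵥ (V.mulVec x) := by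
    simp [dotProduct, mulVec, sq, hV, Finset.sum_mul, Finset.mul_sum]
  rw [h1, dot_shift, mulVec_mulVec, hVTV, one_mulVec]

lemma specNorm_sum_le (v : Fin d → (Fin d → ℝ))
    (hortho : ∀ i j, v i ⬝ᵥ v j = if i = j then (1 : ℝ) else 0)
    (s : Finset (Fin d)) (c : Fin d → ℝ) (b : ℝ) (hb : 0 ≤ b)
    (h0 : ∀ i ∈ s, 0 ≤ c i) (h1 : ∀ i ∈ s, c i ≤ b) :
    specNorm (∑ i ∈ s, c i • vecMulVec (v i) (v i)) ≤ b := by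
  refine specNorm_le_of_mulVec _ b hb fun x => ?_
  have hmv : (∑ i ∈ s, c i • vecMulVec (v i) (v i)).mulVec x
      = ∑ i ∈ s, (c i * (v i ⬝ᵥ x)) • v i := by
    rw [sum_mulVec']
    refine Finset.sum_congr rfl fun i _ => ?_
    rw [smul_mulVec, mulVec_vvT, smul_smul]
  rw [hmv]
  have hdot : (∑ i ∈ s, (c i * (v i ⬝ᵥ x)) • v i) ⬝ᵥ (∑ j ∈ s, (c j * (v j ⬝ᵥ x)) • v j)
      = ∑ i ∈ s, (c i * (v i ⬝ᵥ x)) ^ 2 := by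
    rw [sum_dotProduct']
    refine Finset.sum_congr rfl fun i hi => ?_
    rw [dotProduct_sum']
    have inner : ∀ j ∈ s, ((c i * (v i ⬝ᵥ x)) • v i) ⬝ᵥ ((c j * (v j ⬝ᵥ x)) • v j)
        = if i = j then (c i * (v i ⬝ᵥ x)) ^ 2 else 0 := by
      intro j _
      rw [smul_dotProduct, dotProduct_smul, hortho, smul_eq_mul, smul_eq_mul]
      split_ifs with hij
      · subst hij; ring
      · simp
    rw [Finset.sum_congr rfl inner, Finset.sum_ite_eq s i fun _ => (c i * (v i ⬝ᵥ x)) ^ 2,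
      if_pos hi]
  rw [hdot]
  have step1 : ∑ i ∈ s, (c i * (v i ⬝ᵥ x)) ^ 2 ≤ b ^ 2 * ∑ i ∈ s, (v i ⬝ᵥ x) ^ 2 := by
    rw [Finset.mul_sum]
    refine Finset.sum_le_sum fun i hi => ?_
    have : (c i) ^ 2 ≤ b ^ 2 := pow_le_pow_left₀ (h0 i hi) (h1 i hi) 2
    calc (c i * (v i ⬝ᵥ x)) ^ 2 = (c i) ^ 2 * (v i ⬝ᵥ x) ^ 2 := by ring
    _ ≤ b ^ 2 * (v i ⬝ᵥ x) ^ 2 := mul_le_mul_of_nonneg_right this (sq_nonneg _)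
  have step2 : ∑ i ∈ s, (v i ⬝ᵥ x) ^ 2 ≤ ∑ i : Fin d, (v i ⬝ᵥ x) ^ 2 :=
    Finset.sum_le_sum_of_subset_of_nonneg (Finset.subset_univ s)
      (fun i _ _ => sq_nonneg _)
  have := sum_dot_sq v hortho x
  nlinarith [sq_nonneg b]

end sumbound

section bounds
variable {d : ℕ}

lemma pair_bound (X Y : Matrix (Fin d) (Fin d) ℝ) (a b : ℝ) (ha : 0 ≤ a)
    (hX : specNorm X ≤ a) (hY : specNorm Y ≤ b) : specNorm (X * Y) ≤ a * b :=
  (specNorm_mul_le _ _).trans (mul_le_mul hX hY (specNorm_nonneg _) ha)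

lemma triple_bound (X Y Z : Matrix (Fin d) (Fin d) ℝ) (a b c : ℝ)
    (ha : 0 ≤ a) (hb : 0 ≤ b)
    (hX : specNorm X ≤ a) (hY : specNorm Y ≤ b) (hZ : specNorm Z ≤ c) :
    specNorm (X * Y * Z) ≤ a * b * c :=
  (specNorm_mul_le _ _).trans
    (mul_le_mul (pair_bound X Y a b ha hX hY) hZ (specNorm_nonneg _) (mul_nonneg ha hb))

end bounds

/-- Spectral-norm bound for the coarse preconditioner `A = γ̂ Π̂ + (I - Π̂)`, where `Π̂` is a
rank-`k` orthogonal projection within `φ` (in spectral norm) of the projection `Pr` onto the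
top-`k` eigenspace of `Σ`.  Eigenvalues are written 0-indexed, so `lam ⟨0, _⟩ = λ_1` and
`lam ⟨k, hk⟩ = λ_{k+1}`. -/
theorem coarse_preconditioner_spec_bound {d k : ℕ} (hk0 : 1 ≤ k) (hk : k < d)
    (v : Fin d → (Fin d → ℝ))
    (hortho : ∀ i j, v i ⬝ᵥ v j = if i = j then (1 : ℝ) else 0)
    (lam : Fin d → ℝ) (hanti : Antitone lam) (hpos : ∀ i, 0 ≤ lam i)
    (S : Matrix (Fin d) (Fin d) ℝ)
    (hS : S = ∑ i, lam i • vecMulVec (v i) (v i))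
    (hgap : lam ⟨k, hk⟩ < lam ⟨k - 1, by omega⟩)
    (Pr Prh : Matrix (Fin d) (Fin d) ℝ)
    (hPr : Pr = ∑ i ∈ Finset.univ.filter (fun i : Fin d => (i : ℕ) < k),
      vecMulVec (v i) (v i))
    (hproj : Prh * Prh = Prh) (hsymm : Prhᵀ = Prh) (hrank : Prh.rank = k)
    (φ γh : ℝ) (hφ0 : 0 ≤ φ) (hφ : specNorm (Prh - Pr) ≤ φ)
    (hγ : 0 < γh) (hγ1 : γh ≤ 1)
    (A : Matrix (Fin d) (Fin d) ℝ) (hA : A = γh • Prh + (1 - Prh)) :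
    specNorm (A * S * A) ≤
      (γh + φ) ^ 2 * lam ⟨0, Nat.lt_of_le_of_lt (Nat.zero_le k) hk⟩ +
        2 * (γh + φ) * φ * lam ⟨0, Nat.lt_of_le_of_lt (Nat.zero_le k) hk⟩ +
        lam ⟨k, hk⟩ + 2 * φ * lam ⟨k, hk⟩ +
        φ ^ 2 * lam ⟨0, Nat.lt_of_le_of_lt (Nat.zero_le k) hk⟩ := by
  set i0 : Fin d := ⟨0, Nat.lt_of_le_of_lt (Nat.zero_le k) hk⟩ with hi0
  set ik : Fin d := ⟨k, hk⟩ with hik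
  set s : Finset (Fin d) := Finset.univ.filter (fun i : Fin d => (i : ℕ) < k) with hs
  set t : Finset (Fin d) := Finset.univ.filter (fun i : Fin d => ¬ (i : ℕ) < k) with ht
  have hst : s ∩ t = ∅ := by
    ext i; simp [hs, ht]
  set Stop : Matrix (Fin d) (Fin d) ℝ := ∑ i ∈ s, lam i • vecMulVec (v i) (v i) with hStop
  set Srest : Matrix (Fin d) (Fin d) ℝ := ∑ i ∈ t, lam i • vecMulVec (v i) (v i) with hSrest
  have hSsplit : S = Stop + Srest := by
    rw [hS, hStop, hSrest, hs, ht,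
      Finset.sum_filter_add_sum_filter_not Finset.univ (fun i : Fin d => (i : ℕ) < k)]
  have hPr' : Pr = ∑ i ∈ s, (1 : ℝ) • vecMulVec (v i) (v i) := by
    simpa [one_smul] using hPr
  -- projection facts for Pr
  have hPrPr : Pr * Pr = Pr := by
    rw [hPr', sum_vvT_mul v hortho, Finset.inter_self]
    simp [one_smul]
  have hPrT : Prᵀ = Pr := by
    rw [hPr]; ext i j
    simp [Matrix.sum_apply, vecMulVec_apply, mul_comm]
  -- products with Stop / Srest
  have hPrStop : Pr * Stop = Stop := by
    rw [hPr', hStop, sum_vvT_mul v hortho, Finset.inter_self]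
    simp [one_mul]
  have hStopPr : Stop * Pr = Stop := by
    rw [hPr', hStop, sum_vvT_mul v hortho, Finset.inter_self]
    simp [mul_one]
  have hPrSrest : Pr * Srest = 0 := by
    rw [hPr', hSrest, sum_vvT_mul v hortho, hst, Finset.sum_empty]
  have hSrestPr : Srest * Pr = 0 := by
    rw [hPr', hSrest, sum_vvT_mul v hortho, Finset.inter_comm, hst, Finset.sum_empty]
  have h1Srest : (1 - Pr) * Srest = Srest := by
    rw [sub_mul, one_mul, hPrSrest, sub_zero]
  have hSrest1 : Srest * (1 - Pr) = Srest := by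
    rw [mul_sub, mul_one, hSrestPr, sub_zero]
  -- facts about Prh
  have h1proj : (1 - Prh) * (1 - Prh) = 1 - Prh := by
    simp only [mul_sub, sub_mul, one_mul, mul_one, hproj]; abel
  have h1symm : (1 - Prh)ᵀ = 1 - Prh := by
    rw [transpose_sub, transpose_one, hsymm]
  -- norm facts
  have nPrh : specNorm Prh ≤ 1 := specNorm_proj_le _ hproj hsymm
  have nPr : specNorm Pr ≤ 1 := specNorm_proj_le _ hPrPr hPrT
  have n1Prh : specNorm (1 - Prh) ≤ 1 := specNorm_proj_le _ h1proj h1symm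
  have nA : specNorm A ≤ 1 := by rw [hA]; exact specNorm_A_le Prh hproj hsymm γh hγ.le hγ1
  have nE : specNorm (Pr - Prh) ≤ φ := by
    rw [← neg_sub, specNorm_neg]; exact hφ
  -- A-products with Prh
  have hAPrh : A * Prh = γh • Prh := by
    rw [hA, add_mul, smul_mul_assoc, sub_mul, one_mul, hproj]; abel
  have hPrhA : Prh * A = γh • Prh := by
    rw [hA, mul_add, mul_smul_comm, mul_sub, mul_one, hproj]; abel
  -- norm of A * Pr and Pr * A
  have nAPr : specNorm (A * Pr) ≤ γh + φ := by
    have hid : A * Pr = γh • (Prh * Pr) + (1 - Prh) * (Pr - Prh) := by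
      rw [hA]
      simp only [add_mul, sub_mul, mul_sub, smul_mul_assoc, one_mul, mul_one, hproj]
      abel
    rw [hid]
    have b1 : specNorm (γh • (Prh * Pr)) ≤ γh := by
      rw [specNorm_smul, abs_of_pos hγ]
      have := pair_bound Prh Pr 1 1 zero_le_one nPrh nPr
      nlinarith
    have b2 : specNorm ((1 - Prh) * (Pr - Prh)) ≤ φ := by
      have := pair_bound (1 - Prh) (Pr - Prh) 1 φ zero_le_one n1Prh nE
      linarith
    linarith [specNorm_add_le (γh • (Prh * Pr)) ((1 - Prh) * (Pr - Prh))]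
  have nPrA : specNorm (Pr * A) ≤ γh + φ := by
    have hid : Pr * A = γh • (Pr * Prh) + (Pr - Prh) * (1 - Prh) := by
      rw [hA]
      simp only [mul_add, sub_mul, mul_sub, mul_smul_comm, one_mul, mul_one, hproj]
      abel
    rw [hid]
    have b1 : specNorm (γh • (Pr * Prh)) ≤ γh := by
      rw [specNorm_smul, abs_of_pos hγ]
      have := pair_bound Pr Prh 1 1 zero_le_one nPr nPrh
      nlinarith
    have b2 : specNorm ((Pr - Prh) * (1 - Prh)) ≤ φ := by
      have := pair_bound (Pr - Prh) (1 - Prh) φ 1 hφ0 nE n1Prh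
      linarith
    linarith [specNorm_add_le (γh • (Pr * Prh)) ((Pr - Prh) * (1 - Prh))]
  -- norm of A * (1 - Pr) and (1 - Pr) * A
  have nA1Pr : specNorm (A * (1 - Pr)) ≤ 1 + φ := by
    have hid : A * (1 - Pr) = (1 - Prh) + A * (Prh - Pr) := by
      rw [mul_sub, mul_one, mul_sub, hAPrh, hA]; abel
    rw [hid]
    have b2 : specNorm (A * (Prh - Pr)) ≤ φ := by
      have h' : specNorm (Prh - Pr) ≤ φ := hφ
      have := pair_bound A (Prh - Pr) 1 φ zero_le_one nA h'
      linarith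
    linarith [specNorm_add_le (1 - Prh) (A * (Prh - Pr))]
  have n1PrA : specNorm ((1 - Pr) * A) ≤ 1 + φ := by
    have hid : (1 - Pr) * A = (1 - Prh) + (Prh - Pr) * A := by
      rw [sub_mul, one_mul, sub_mul, hPrhA, hA]; abel
    rw [hid]
    have b2 : specNorm ((Prh - Pr) * A) ≤ φ := by
      have := pair_bound (Prh - Pr) A φ 1 hφ0 hφ nA
      linarith
    linarith [specNorm_add_le (1 - Prh) ((Prh - Pr) * A)]
  -- norms of Stop and Srest
  have nStop : specNorm Stop ≤ lam i0 := by
    rw [hStop]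
    exact specNorm_sum_le v hortho s lam (lam i0) (hpos _) (fun i _ => hpos i)
      (fun i _ => hanti (by simp [hi0, Fin.le_def]))
  have nSrest : specNorm Srest ≤ lam ik := by
    rw [hSrest]
    refine specNorm_sum_le v hortho t lam (lam ik) (hpos _) (fun i _ => hpos i) ?_
    intro i hi
    have h' : ¬ (i : ℕ) < k := by simpa [ht] using hi
    exact hanti (by simp [hik, Fin.le_def]; omega)
  -- decomposition
  have e1 : (A * Pr) * Stop * (Pr * A) = A * Stop * A := by
    rw [mul_assoc (A * Pr) Stop (Pr * A), ← mul_assoc Stop Pr A, hStopPr,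
      mul_assoc A Pr (Stop * A), ← mul_assoc Pr Stop A, hPrStop, ← mul_assoc]
  have e2 : (A * (1 - Pr)) * Srest * ((1 - Pr) * A) = A * Srest * A := by
    rw [mul_assoc (A * (1 - Pr)) Srest ((1 - Pr) * A), ← mul_assoc Srest (1 - Pr) A, hSrest1,
      mul_assoc A (1 - Pr) (Srest * A), ← mul_assoc (1 - Pr) Srest A, h1Srest, ← mul_assoc]
  have hsplit : A * S * A = A * Stop * A + A * Srest * A := by
    rw [hSsplit, mul_add, add_mul]
  have bTop : specNorm (A * Stop * A) ≤ (γh + φ) * lam i0 * (γh + φ) := by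
    rw [← e1]
    exact triple_bound _ _ _ _ _ _ (by linarith) (hpos _) nAPr nStop nPrA
  have bRest : specNorm (A * Srest * A) ≤ (1 + φ) * lam ik * (1 + φ) := by
    rw [← e2]
    exact triple_bound _ _ _ _ _ _ (by linarith) (hpos _) nA1Pr nSrest n1PrA
  have hfin := (specNorm_add_le (A * Stop * A) (A * Srest * A))
  rw [hsplit]
  have hk0' : lam ik ≤ lam i0 := hanti (by simp [hi0, hik, Fin.le_def])
  nlinarith [hpos i0, hpos ik, mul_nonneg hφ0 (hpos i0), mul_nonneg hγ.le hφ0,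
    mul_nonneg (mul_nonneg hφ0 hφ0) (hpos i0)]
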